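/- Let f(t) be a polynomial with complex coefficients of degree at most p, with f(t) = sum_{m} a_m t^m. Then for any complex number z, the sum over n from 1 to p of (1/n) * (sum over k from 0 to n of binomial(n,k) * (-1)^k * f(z*k)) equals -a_1 * z, where a_1 = f'(0). -/

import Mathlib

open Finset

noncomputable def Dsum (n m : ℕ) : ℂ :=
  ∑ k ∈ Finset.range (n + 1), (-1 : ℂ) ^ k * (n.choose k : ℂ) * (k : ℂ) ^ m

noncomputable def Esum (n m : ℕ) : ℂ :=
  ∑ j ∈ Finset.range (n + 1), (-1 : ℂ) ^ j * (n.choose j : ℂ) * ((j : ℂ) + 1) ^ m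

lemma Dsum_zero (n : ℕ) : Dsum n 0 = if n = 0 then 1 else 0 := by
  have h := Int.alternating_sum_range_choose (n := n)
  have h2 := congrArg (fun x : ℤ => (x : ℂ)) h
  push_cast at h2
  simpa [Dsum] using h2

lemma lemA (n m : ℕ) :
    Dsum (n + 1) (m + 1) = -((n : ℂ) + 1) * Esum n m := by
  rw [Dsum, Esum, Finset.sum_range_succ']
  have h0 : (-1 : ℂ) ^ 0 * ((n + 1).choose 0 : ℂ) * ((0 : ℕ) : ℂ) ^ (m + 1) = 0 := by
    simp
  rw [h0, add_zero, Finset.mul_sum]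
  refine Finset.sum_congr rfl fun i _ => ?_
  have key : ((n + 1).choose (i + 1) : ℂ) * ((i : ℂ) + 1) = ((n : ℂ) + 1) * (n.choose i : ℂ) := by
    have := Nat.add_one_mul_choose_eq n i
    exact_mod_cast this.symm
  push_cast
  calc (-1 : ℂ) ^ (i + 1) * ((n + 1).choose (i + 1) : ℂ) * ((i : ℂ) + 1) ^ (m + 1)
      = -((-1 : ℂ) ^ i * (((n + 1).choose (i + 1) : ℂ) * ((i : ℂ) + 1)) * ((i : ℂ) + 1) ^ m) := by
        ring
    _ = -((n : ℂ) + 1) * ((-1 : ℂ) ^ i * (n.choose i : ℂ) * ((i : ℂ) + 1) ^ m) := by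
        rw [key]; ring

lemma lemB (n m : ℕ) :
    Dsum (n + 1) m = Dsum n m - Esum n m := by
  have hext : Dsum n m = ∑ k ∈ Finset.range (n + 2), (-1 : ℂ) ^ k * (n.choose k : ℂ) * (k : ℂ) ^ m := by
    rw [Dsum, Finset.sum_range_succ (fun k => (-1 : ℂ) ^ k * (n.choose k : ℂ) * (k : ℂ) ^ m) (n + 1)]
    simp [Nat.choose_succ_self]
  rw [hext, Dsum, Esum, eq_sub_iff_add_eq]
  rw [Finset.sum_range_succ' (fun k => (-1 : ℂ) ^ k * ((n + 1).choose k : ℂ) * (k : ℂ) ^ m) (n + 1)]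
  rw [Finset.sum_range_succ' (fun k => (-1 : ℂ) ^ k * (n.choose k : ℂ) * (k : ℂ) ^ m) (n + 1)]
  rw [add_right_comm, ← Finset.sum_add_distrib]
  congr 1
  · refine Finset.sum_congr rfl fun i _ => ?_
    have pascal : ((n + 1).choose (i + 1) : ℂ) = (n.choose i : ℂ) + (n.choose (i + 1) : ℂ) := by
      exact_mod_cast congrArg (Nat.cast : ℕ → ℂ) (Nat.choose_succ_succ n i)
    push_cast
    rw [pascal]; ring
  · simp

lemma Dsum_rec (n m : ℕ) :
    Dsum (n + 1) (m + 1) = ((n : ℂ) + 1) * (Dsum (n + 1) m - Dsum n m) := by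
  rw [lemA, lemB]; ring

lemma Dsum_eq_zero : ∀ m n : ℕ, m < n → Dsum n m = 0 := by
  intro m
  induction m with
  | zero =>
    intro n hn
    rw [Dsum_zero, if_neg (by omega)]
  | succ m ih =>
    intro n hn
    obtain ⟨n', rfl⟩ : ∃ n', n = n' + 1 := ⟨n - 1, by omega⟩
    rw [Dsum_rec, ih (n' + 1) (by omega), ih n' (by omega)]
    ring

lemma Tsum_eval (p m : ℕ) (hm : m ≤ p) :
    ∑ n ∈ Finset.Icc 1 p, (1 / (n : ℂ)) * Dsum n m = if m = 1 then -1 else 0 := by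
  cases m with
  | zero =>
    rw [Finset.sum_eq_zero]
    · simp
    intro n hn
    rw [Finset.mem_Icc] at hn
    rw [Dsum_zero, if_neg (by omega), mul_zero]
  | succ m =>
    have hIcc : ∑ n ∈ Finset.Icc 1 p, (1 / (n : ℂ)) * Dsum n (m + 1)
        = ∑ i ∈ Finset.range p, (1 / ((1 + i : ℕ) : ℂ)) * Dsum (1 + i) (m + 1) := by
      rw [show Finset.Icc 1 p = Finset.Ico 1 (p + 1) from (Finset.Ico_add_one_right_eq_Icc 1 p).symm,
        Finset.sum_Ico_eq_sum_range]
      simp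
    rw [hIcc]
    have step : ∀ i ∈ Finset.range p,
        (1 / ((1 + i : ℕ) : ℂ)) * Dsum (1 + i) (m + 1) = Dsum (i + 1) m - Dsum i m := by
      intro i _
      have h1 : (1 + i : ℕ) = i + 1 := by omega
      rw [h1, Dsum_rec]
      have hne : ((i : ℂ) + 1) ≠ 0 := Nat.cast_add_one_ne_zero i
      push_cast
      rw [one_div, inv_mul_cancel_left₀ hne]
    rw [Finset.sum_congr rfl step, Finset.sum_range_sub (fun i => Dsum i m)]
    have hp : 0 < p := by omega
    have hDp : Dsum p m = 0 := Dsum_eq_zero m p (by omega)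
    have hD0 : Dsum 0 m = if m = 0 then 1 else 0 := by
      simp [Dsum]
      rcases Nat.eq_zero_or_pos m with h | h
      · simp [h]
      · simp [zero_pow h.ne', if_neg h.ne']
    rw [hDp, hD0]
    rcases Nat.eq_zero_or_pos m with h | h
    · simp [h]
    · simp [h.ne', if_neg, show m + 1 ≠ 1 by omega]

theorem binomial_sum_poly_eval (p : ℕ) (f : Polynomial ℂ) (hdeg : f.degree ≤ p) (z : ℂ) :
    ∑ n ∈ Finset.Icc 1 p, (1 / n : ℂ) *
      ∑ k ∈ Finset.range (n + 1), (n.choose k : ℂ) * (-1) ^ k * f.eval (z * k)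
      = -(f.coeff 1) * z := by
  have hnd : f.natDegree < p + 1 := by
    have := Polynomial.natDegree_le_iff_degree_le.mpr hdeg
    omega
  have heval : ∀ x : ℂ, f.eval x = ∑ m ∈ Finset.range (p + 1), f.coeff m * x ^ m :=
    fun x => Polynomial.eval_eq_sum_range' hnd x
  have inner : ∀ n : ℕ, (1 / (n : ℂ)) *
      ∑ k ∈ Finset.range (n + 1), (n.choose k : ℂ) * (-1) ^ k * f.eval (z * k)
      = ∑ m ∈ Finset.range (p + 1), (f.coeff m * z ^ m) * ((1 / (n : ℂ)) * Dsum n m) := by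
    intro n
    have h1 : ∑ k ∈ Finset.range (n + 1), (n.choose k : ℂ) * (-1) ^ k * f.eval (z * k)
        = ∑ m ∈ Finset.range (p + 1), (f.coeff m * z ^ m) * Dsum n m := by
      have h2 : ∀ k ∈ Finset.range (n + 1), (n.choose k : ℂ) * (-1) ^ k * f.eval (z * k)
          = ∑ m ∈ Finset.range (p + 1),
              (f.coeff m * z ^ m) * ((-1 : ℂ) ^ k * (n.choose k : ℂ) * (k : ℂ) ^ m) := by
        intro k _
        rw [heval, Finset.mul_sum]
        refine Finset.sum_congr rfl fun m _ => ?_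
        rw [mul_pow]
        ring
      rw [Finset.sum_congr rfl h2, Finset.sum_comm]
      refine Finset.sum_congr rfl fun m _ => ?_
      rw [Dsum, Finset.mul_sum]
    rw [h1, Finset.mul_sum]
    refine Finset.sum_congr rfl fun m _ => ?_
    ring
  rw [Finset.sum_congr rfl (fun n _ => inner n), Finset.sum_comm]
  have hT : ∀ m ∈ Finset.range (p + 1),
      ∑ n ∈ Finset.Icc 1 p, (f.coeff m * z ^ m) * ((1 / (n : ℂ)) * Dsum n m)
      = (f.coeff m * z ^ m) * (if m = 1 then -1 else 0) := by
    intro m hm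
    rw [← Finset.mul_sum, Tsum_eval p m (by simpa using Nat.lt_succ_iff.mp (Finset.mem_range.mp hm))]
  rw [Finset.sum_congr rfl hT]
  have : ∑ m ∈ Finset.range (p + 1), (f.coeff m * z ^ m) * (if m = 1 then -1 else 0)
      = ∑ m ∈ Finset.range (p + 1), (if m = 1 then -(f.coeff 1) * z else 0) := by
    refine Finset.sum_congr rfl fun m _ => ?_
    split_ifs with h
    · subst h; ring
    · ring
  rw [this, Finset.sum_ite_eq' (Finset.range (p + 1)) 1]
  split_ifs with h
  · rfl
  · have hp : p = 0 := by
      simp [Finset.mem_range] at h; omega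
    subst hp
    have : f.coeff 1 = 0 := by
      apply Polynomial.coeff_eq_zero_of_degree_lt
      calc f.degree ≤ (0:ℕ) := hdeg
        _ < (1:ℕ) := by norm_num
    simp [this]
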